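/- arXiv:1601.04312 — 2 statements merged into one kernel-verified Lean document; each statement's English description precedes it below -/
import Mathlib

section
/- Let {K_i} be a family of convex bodies in ℝⁿ forming a k-fold tiling of a connected set D (each point of D not on the boundary of any K_i belongs to exactly k bodies of the family, counted with multiplicity). Then for every index i and every point q ∈ ∂K_i that is an interior point of D, there exists an index j with q ∈ ∂K_j and int(K_i) ∩ int(K_j) = ∅. -/
open Set Metric Module Filter

section Core
variable {E : Type*} [NormedAddCommGroup E] [NormedSpace ℝ E]

/-- The open tangent cone of `C` at `p`. -/
def Oc (C : Set E) (p : E) : Set E := {u | ∃ t : ℝ, 0 < t ∧ p + t • u ∈ interior C}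

/-- The (closed) tangent cone of `C` at `p`. -/
def Tc (C : Set E) (p : E) : Set E := closure (Oc C p)

variable {C : Set E} {p : E}

theorem isOpen_Oc : IsOpen (Oc C p) := by
  have h : Oc C p = ⋃ t ∈ Ioi (0:ℝ), (fun u => p + t • u) ⁻¹' interior C := by
    ext u; simp [Oc, mem_iUnion]
  rw [h]
  exact isOpen_biUnion fun t _ =>
    isOpen_interior.preimage (continuous_const.add (continuous_id.const_smul t))

theorem isClosed_Tc : IsClosed (Tc C p) := isClosed_closure

theorem Oc_subset_Tc : Oc C p ⊆ Tc C p := subset_closure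

theorem Oc_downward (hC : Convex ℝ C) (hp : p ∈ C) {u : E} {t s : ℝ} (hs : 0 < s) (hst : s ≤ t)
    (h : p + t • u ∈ interior C) : p + s • u ∈ interior C := by
  have ht : 0 < t := lt_of_lt_of_le hs hst
  have h2 := hC.add_smul_mem_interior hp (y := t • u) h
    (t := s / t) ⟨div_pos hs ht, (div_le_one ht).2 hst⟩
  rwa [smul_smul, div_mul_cancel₀ _ ht.ne'] at h2

theorem convex_Oc (hC : Convex ℝ C) (hp : p ∈ C) : Convex ℝ (Oc C p) := by
  rintro u ⟨t₁, ht₁, hu⟩ v ⟨t₂, ht₂, hv⟩ a b ha hb hab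
  have htm : 0 < min t₁ t₂ := lt_min ht₁ ht₂
  refine ⟨min t₁ t₂, htm, ?_⟩
  have hu' := Oc_downward hC hp htm (min_le_left _ _) hu
  have hv' := Oc_downward hC hp htm (min_le_right _ _) hv
  have heq : p + min t₁ t₂ • (a • u + b • v)
      = a • (p + min t₁ t₂ • u) + b • (p + min t₁ t₂ • v) := by
    have hb' : b = 1 - a := by linarith
    subst hb'; module
  rw [heq]
  exact hC.interior hu' hv' ha hb hab

theorem smul_mem_Oc {c : ℝ} (hc : 0 < c) {u : E} (h : u ∈ Oc C p) : c • u ∈ Oc C p := by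
  obtain ⟨t, ht, hmem⟩ := h
  exact ⟨t / c, div_pos ht hc, by rwa [smul_smul, div_mul_cancel₀ _ hc.ne']⟩

theorem sub_mem_Oc {z : E} (hz : z ∈ interior C) : z - p ∈ Oc C p :=
  ⟨1, one_pos, by rwa [one_smul, add_sub_cancel]⟩

theorem Oc_nonempty (hint : (interior C).Nonempty) : (Oc C p).Nonempty := by
  obtain ⟨z, hz⟩ := hint; exact ⟨z - p, sub_mem_Oc hz⟩

theorem mem_Tc_of_ray (hC : Convex ℝ C) (hint : (interior C).Nonempty) {u : E} {t : ℝ}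
    (ht : 0 < t) (h : p + t • u ∈ C) : u ∈ Tc C p := by
  obtain ⟨z, hz⟩ := hint
  have key : ∀ s : ℝ, s ∈ Ioc (0:ℝ) 1 → u + (s / t) • (z - (p + t • u)) ∈ Oc C p := by
    intro s hs
    refine ⟨t, ht, ?_⟩
    have h2 := hC.add_smul_sub_mem_interior h hz hs
    rw [smul_add, smul_smul, mul_div_cancel₀ _ ht.ne']
    rwa [← add_assoc]
  have lim : Tendsto (fun s : ℝ => u + (s / t) • (z - (p + t • u)))
      (nhdsWithin 0 (Ioi (0:ℝ))) (nhds u) := by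
    have hco : Continuous (fun s : ℝ => u + (s / t) • (z - (p + t • u))) := by
      exact continuous_const.add ((continuous_id.div_const t).smul continuous_const)
    have := hco.tendsto 0
    simp only [zero_div, zero_smul, add_zero] at this
    exact this.mono_left nhdsWithin_le_nhds
  have hev : ∀ᶠ s in nhdsWithin (0:ℝ) (Ioi 0), u + (s / t) • (z - (p + t • u)) ∈ Oc C p :=
    Filter.eventually_iff_exists_mem.2 ⟨Ioc 0 1, Ioc_mem_nhdsGT_of_mem ⟨le_refl _, one_pos⟩, key⟩
  exact mem_closure_of_tendsto lim hev

theorem notMem_C_of_notMem_Tc (hC : Convex ℝ C) (hint : (interior C).Nonempty) {u : E}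
    (h : u ∉ Tc C p) {t : ℝ} (ht : 0 < t) : p + t • u ∉ C :=
  fun hmem => h (mem_Tc_of_ray hC hint ht hmem)

theorem interior_Tc (hC : Convex ℝ C) (hp : p ∈ C) (hint : (interior C).Nonempty) :
    interior (Tc C p) = Oc C p := by
  refine subset_antisymm ?_ (interior_maximal Oc_subset_Tc isOpen_Oc)
  intro u hu
  obtain ⟨z₀, hz₀⟩ := Oc_nonempty (p := p) hint
  -- u ∈ interior (closure (Oc C p)); pick y = u + ε (u - z₀) still in closure
  have hcont : Tendsto (fun ε : ℝ => u + ε • (u - z₀)) (nhdsWithin 0 (Ioi (0:ℝ))) (nhds u) := by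
    have hco : Continuous (fun ε : ℝ => u + ε • (u - z₀)) :=
      continuous_const.add (continuous_id.smul continuous_const)
    have := hco.tendsto 0
    simp only [zero_smul, add_zero] at this
    exact this.mono_left nhdsWithin_le_nhds
  have hev : ∀ᶠ ε in nhdsWithin (0:ℝ) (Ioi 0), u + ε • (u - z₀) ∈ interior (Tc C p) :=
    hcont.eventually (isOpen_interior.mem_nhds hu)
  obtain ⟨ε, hε1, hε2⟩ := (hev.and self_mem_nhdsWithin).exists
  have hy : u + ε • (u - z₀) ∈ Tc C p := interior_subset hε1
  have hεpos : (0:ℝ) < ε := hε2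
  -- u = a • z₀ + b • (u + ε(u - z₀)) with a = ε/(1+ε), b = 1/(1+ε)
  have h1ε : (0:ℝ) < 1 + ε := by linarith
  have hconv := (convex_Oc hC hp)
  have hmem := hconv.combo_interior_closure_mem_interior
    (x := z₀) (y := u + ε • (u - z₀)) (a := ε / (1 + ε)) (b := 1 / (1 + ε))
    (by rwa [isOpen_Oc.interior_eq]) hy
    (div_pos hεpos h1ε) (le_of_lt (div_pos one_pos h1ε))
    (by field_simp; ring)
  have heq : (ε / (1 + ε)) • z₀ + (1 / (1 + ε)) • (u + ε • (u - z₀)) = u := by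
    have h1 : (1:ℝ) + ε ≠ 0 := h1ε.ne'
    have h1 : (1:ℝ) + ε ≠ 0 := h1ε.ne'
    match_scalars <;> (field_simp; try ring)
  rw [heq] at hmem
  exact interior_subset hmem

theorem convex_Tc (hC : Convex ℝ C) (hp : p ∈ C) : Convex ℝ (Tc C p) :=
  (convex_Oc hC hp).closure

theorem smul_mem_Tc {c : ℝ} (hc : 0 < c) {u : E} (h : u ∈ Tc C p) : c • u ∈ Tc C p := by
  have hmaps : MapsTo (fun v : E => c • v) (Oc C p) (Oc C p) := fun v hv => smul_mem_Oc hc hv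
  exact hmaps.closure (continuous_id.const_smul c) h

theorem zero_mem_Tc (hC : Convex ℝ C) (hp : p ∈ C) (hint : (interior C).Nonempty) :
    (0:E) ∈ Tc C p :=
  mem_Tc_of_ray hC hint one_pos (by simpa using hp)

theorem interior_frontier_Tc (hC : Convex ℝ C) (hp : p ∈ C) (hint : (interior C).Nonempty) :
    interior (frontier (Tc C p)) = ∅ := by
  rw [isClosed_Tc.frontier_eq]
  by_contra h
  obtain ⟨u, hu⟩ := nonempty_iff_ne_empty.2 h
  have h1 : u ∈ interior (Tc C p) := interior_mono diff_subset hu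
  have h2 : u ∈ Tc C p \ interior (Tc C p) := interior_subset hu
  exact h2.2 h1

end Core
open Set Metric Module Filter

section Topo
variable {E : Type*} [NormedAddCommGroup E] [NormedSpace ℝ E]

theorem interior_union_empty {A B : Set E} (hA : IsClosed A) (hAi : interior A = ∅)
    (hBi : interior B = ∅) : interior (A ∪ B) = ∅ := by
  have hsub : interior (A ∪ B) \ A ⊆ B := fun x hx => (interior_subset hx.1).resolve_left hx.2
  have hU : IsOpen (interior (A ∪ B) \ A) := isOpen_interior.sdiff hA
  have hempty : interior (A ∪ B) \ A = ∅ := by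
    have h2 := interior_maximal hsub hU
    rw [hBi] at h2
    exact eq_empty_iff_forall_notMem.2 fun x hx => h2 hx
  have hsubA : interior (A ∪ B) ⊆ A := by
    intro x hx
    by_contra hxA
    have hmem : x ∈ interior (A ∪ B) \ A := ⟨hx, hxA⟩
    rw [hempty] at hmem
    exact hmem
  have h3 := interior_maximal hsubA isOpen_interior
  rw [hAi] at h3
  exact eq_empty_iff_forall_notMem.2 fun x hx => h3 hx

theorem interior_biUnion_empty {ι : Type*} (F : Finset ι) (f : ι → Set E)
    (hcl : ∀ j ∈ F, IsClosed (f j)) (hint : ∀ j ∈ F, interior (f j) = ∅) :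
    interior (⋃ j ∈ F, f j) = ∅ := by
  classical
  induction F using Finset.induction with
  | empty => simp
  | @insert a s ha ih =>
    rw [Finset.set_biUnion_insert]
    exact interior_union_empty (hcl a (Finset.mem_insert_self a s))
      (hint a (Finset.mem_insert_self a s))
      (ih (fun j hj => hcl j (Finset.mem_insert_of_mem hj))
          (fun j hj => hint j (Finset.mem_insert_of_mem hj)))

theorem dense_good {ι : Type*} (F : Finset ι) (f : ι → Set E)
    (hcl : ∀ j ∈ F, IsClosed (f j)) (hint : ∀ j ∈ F, interior (f j) = ∅) :
    Dense {u : E | ∀ j ∈ F, u ∉ f j} := by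
  have h1 : {u : E | ∀ j ∈ F, u ∉ f j} = (⋃ j ∈ F, f j)ᶜ := by
    ext u; simp
  rw [h1]
  exact interior_eq_empty_iff_dense_compl.1 (interior_biUnion_empty F f hcl hint)

end Topo

section Half
variable {E : Type*} [NormedAddCommGroup E] [InnerProductSpace ℝ E]

local notation "⟪" x ", " y "⟫" => @inner ℝ _ _ x y

theorem ktConeAdd {T : Set E} (hconv : Convex ℝ T)
    (hcone : ∀ c : ℝ, 0 < c → ∀ u ∈ T, c • u ∈ T) {a b : E}
    (ha : a ∈ T) (hb : b ∈ T) : a + b ∈ T := by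
  have hmid : (1/2 : ℝ) • a + (1/2 : ℝ) • b ∈ T :=
    hconv ha hb (by norm_num) (by norm_num) (by norm_num)
  have := hcone 2 (by norm_num) _ hmid
  rwa [smul_add, smul_smul, smul_smul, show (2:ℝ) * (1/2) = 1 by norm_num, one_smul,
    one_smul] at this

theorem ktHalfSub {ν : E} {T : Set E} (hconv : Convex ℝ T)
    (hcone : ∀ c : ℝ, 0 < c → ∀ u ∈ T, c • u ∈ T)
    (hker : ∀ w : E, ⟪ν, w⟫ = 0 → w ∈ T) {x : E} (hx : x ∈ T) (hpos : 0 < ⟪ν, x⟫) :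
    {y : E | 0 ≤ ⟪ν, y⟫} ⊆ T := by
  intro y hy
  have hy' : (0:ℝ) ≤ ⟪ν, y⟫ := hy
  rcases eq_or_lt_of_le hy' with he | hlt
  · exact hker y he.symm
  · set r : ℝ := ⟪ν, y⟫ / ⟪ν, x⟫ with hr
    have hrpos : 0 < r := div_pos hlt hpos
    have hw : ⟪ν, y - r • x⟫ = 0 := by
      rw [inner_sub_right, real_inner_smul_right, hr, div_mul_cancel₀ _ hpos.ne']
      ring
    have h1 : y - r • x ∈ T := hker _ hw
    have h2 : r • x ∈ T := hcone r hrpos x hx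
    have := ktConeAdd hconv hcone h1 h2
    rwa [sub_add_cancel] at this

theorem ktIntHalf {ν : E} (hν : ν ≠ 0) :
    interior {y : E | 0 ≤ ⟪ν, y⟫} = {y : E | 0 < ⟪ν, y⟫} := by
  have hcont : Continuous fun y : E => ⟪ν, y⟫ := continuous_const.inner continuous_id
  refine subset_antisymm ?_ ?_
  · intro x hx
    by_contra hlt
    have hx' : x ∈ {y : E | 0 ≤ ⟪ν, y⟫} := interior_subset hx
    rw [mem_setOf_eq] at hx'
    have hx0 : ⟪ν, x⟫ = 0 := le_antisymm (not_lt.1 hlt) hx'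

    have hlim : Tendsto (fun t : ℝ => x - t • ν) (nhdsWithin 0 (Ioi 0)) (nhds x) := by
      have hco : Continuous fun t : ℝ => x - t • ν :=
        continuous_const.sub (continuous_id.smul continuous_const)
      have := hco.tendsto 0
      simp only [zero_smul, sub_zero] at this
      exact this.mono_left nhdsWithin_le_nhds
    have hev : ∀ᶠ t in nhdsWithin (0:ℝ) (Ioi 0), x - t • ν ∈ interior {y : E | 0 ≤ ⟪ν, y⟫} :=
      hlim.eventually (isOpen_interior.mem_nhds hx)
    obtain ⟨t, ht1, ht2⟩ := (hev.and self_mem_nhdsWithin).exists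
    have ht1' : x - t • ν ∈ {y : E | 0 ≤ ⟪ν, y⟫} := interior_subset ht1
    rw [mem_setOf_eq] at ht1'
    have : (0:ℝ) ≤ ⟪ν, x - t • ν⟫ := ht1'

    rw [inner_sub_right, hx0, real_inner_smul_right, real_inner_self_eq_norm_sq] at this
    have hνn : 0 < ‖ν‖ := norm_pos_iff.2 hν
    have hν2 : 0 < ‖ν‖ ^ 2 := by positivity
    nlinarith [ht2, mul_pos (show (0:ℝ) < t from ht2) hν2]
  · refine interior_maximal ?_ (isOpen_lt continuous_const hcont)
    intro y hy
    rw [mem_setOf_eq] at hy ⊢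
    exact le_of_lt hy


theorem ktFrHalf {ν : E} (hν : ν ≠ 0) :
    frontier {y : E | 0 ≤ ⟪ν, y⟫} = {y : E | ⟪ν, y⟫ = 0} := by
  have hcont : Continuous fun y : E => ⟪ν, y⟫ := continuous_const.inner continuous_id
  have hcl : IsClosed {y : E | 0 ≤ ⟪ν, y⟫} := isClosed_le continuous_const hcont
  rw [frontier, hcl.closure_eq, ktIntHalf hν]
  ext y; simp only [mem_diff, mem_setOf_eq, not_lt]
  constructor
  · rintro ⟨h1, h2⟩; linarith
  · intro h; exact ⟨le_of_eq h.symm, le_of_eq h⟩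

theorem ktHalfClassify {ν : E} (hν : ν ≠ 0) {T : Set E}
    (hconv : Convex ℝ T)
    (hcone : ∀ c : ℝ, 0 < c → ∀ u ∈ T, c • u ∈ T)
    (hker : ∀ w : E, ⟪ν, w⟫ = 0 → w ∈ T)
    (hint : (interior T).Nonempty)
    (hfr : (0:E) ∈ frontier T) :
    T = {y : E | 0 ≤ ⟪ν, y⟫} ∨ T = {y : E | ⟪ν, y⟫ ≤ 0} := by
  have hkerneg : ∀ w : E, ⟪-ν, w⟫ = 0 → w ∈ T := by
    intro w hw; rw [inner_neg_left, neg_eq_zero] at hw; exact hker w hw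
  -- a point of T with nonzero inner product
  obtain ⟨z, hz⟩ := hint
  have hzT : z ∈ T := interior_subset hz
  obtain ⟨x₀, hx₀T, hx₀⟩ : ∃ x₀, x₀ ∈ T ∧ ⟪ν, x₀⟫ ≠ 0 := by
    by_cases h : ⟪ν, z⟫ ≠ 0
    · exact ⟨z, hzT, h⟩
    · push_neg at h
      obtain ⟨δ, hδ, hball⟩ := Metric.isOpen_iff.1 isOpen_interior z hz
      refine ⟨z + (δ / (2 * ‖ν‖)) • ν, interior_subset (hball ?_), ?_⟩
      · rw [mem_ball_iff_norm]
        have hνn : 0 < ‖ν‖ := norm_pos_iff.2 hν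
        rw [add_sub_cancel_left, norm_smul]
        rw [Real.norm_eq_abs, abs_of_pos (by positivity)]
        rw [div_mul_eq_mul_div, mul_comm]
        rw [div_lt_iff₀ (by positivity)]
        nlinarith
      · rw [inner_add_right, h, real_inner_smul_right, real_inner_self_eq_norm_sq]
        have hνn : 0 < ‖ν‖ := norm_pos_iff.2 hν
        have : 0 < δ / (2 * ‖ν‖) * ‖ν‖ ^ 2 := by positivity
        linarith
  have hnotuniv : interior T ≠ univ := by
    intro h
    have h0 : (0:E) ∈ interior T := by rw [h]; exact mem_univ _
    exact (disjoint_left.1 disjoint_interior_frontier h0) hfr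
  rcases hx₀.lt_or_gt with hneg | hpos
  · right
    have hsub : {y : E | 0 ≤ ⟪-ν, y⟫} ⊆ T := by
      refine ktHalfSub hconv hcone hkerneg hx₀T ?_
      rw [inner_neg_left]; linarith
    have hsub' : {y : E | ⟪ν, y⟫ ≤ 0} ⊆ T := by
      intro y hy; apply hsub; rw [mem_setOf_eq, inner_neg_left]; simp at hy ⊢; linarith
    refine subset_antisymm ?_ hsub'
    intro y hyT
    by_contra hy
    simp only [mem_setOf_eq, not_le] at hy
    have hTuniv : ∀ w : E, w ∈ T := by
      intro w
      rcases le_or_gt (⟪ν, w⟫) 0 with h | h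
      · exact hsub' h
      · exact ktHalfSub hconv hcone hker hyT hy (le_of_lt h)
    apply hnotuniv
    have hTu : T = univ := eq_univ_iff_forall.2 hTuniv
    rw [hTu, interior_univ]
  · left
    have hsub' : {y : E | 0 ≤ ⟪ν, y⟫} ⊆ T := ktHalfSub hconv hcone hker hx₀T hpos
    refine subset_antisymm ?_ hsub'
    intro y hyT
    by_contra hy
    simp only [mem_setOf_eq, not_le] at hy
    have hTuniv : ∀ w : E, w ∈ T := by
      intro w
      rcases le_or_gt 0 (⟪ν, w⟫) with h | h
      · exact hsub' h
      · refine ktHalfSub hconv hcone hkerneg hyT ?_ ?_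
        · rw [inner_neg_left]; linarith
        · rw [mem_setOf_eq, inner_neg_left]; linarith
    apply hnotuniv
    have hTu : T = univ := eq_univ_iff_forall.2 hTuniv
    rw [hTu, interior_univ]

end Half
open Set Metric Module Filter

section Base
variable {E : Type*} [NormedAddCommGroup E] [InnerProductSpace ℝ E] [FiniteDimensional ℝ E]

local notation "⟪" x ", " y "⟫" => @inner ℝ _ _ x y

theorem ktMemOrthSingleton {ν x : E} :
    x ∈ (Submodule.span ℝ {ν})ᗮ ↔ ⟪ν, x⟫ = 0 := by
  rw [Submodule.mem_orthogonal]
  constructor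
  · intro h; exact h ν (Submodule.mem_span_singleton_self ν)
  · rintro h u hu
    obtain ⟨a, rfl⟩ := Submodule.mem_span_singleton.1 hu
    rw [real_inner_smul_left, h, mul_zero]

theorem ktSubmoduleTop {L : Submodule ℝ E} (h : (interior (L : Set E)).Nonempty) : L = ⊤ := by
  obtain ⟨x₀, hx₀⟩ := h
  obtain ⟨r, hr, hball⟩ := Metric.isOpen_iff.1 isOpen_interior x₀ hx₀
  rw [Submodule.eq_top_iff']
  intro v
  rcases eq_or_ne v 0 with rfl | hv
  · exact L.zero_mem
  have hvn : 0 < ‖v‖ := norm_pos_iff.2 hv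
  have hy : x₀ + (r / (2 * ‖v‖)) • v ∈ L := by
    apply interior_subset
    apply hball
    rw [mem_ball_iff_norm, add_sub_cancel_left, norm_smul, Real.norm_eq_abs,
      abs_of_pos (by positivity)]
    rw [div_mul_eq_mul_div, mul_comm, mul_comm 2 ‖v‖, div_lt_iff₀ (by positivity)]
    nlinarith
  have hx₀L : x₀ ∈ L := interior_subset hx₀
  have hsub : (r / (2 * ‖v‖)) • v ∈ L := by
    have := L.sub_mem hy hx₀L
    rwa [add_sub_cancel_left] at this
  have := L.smul_mem (2 * ‖v‖ / r) hsub
  rwa [smul_smul, div_mul_div_comm, mul_comm, div_self (by positivity), one_smul] at this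

theorem ktBaseAux {ι : Type*} (F : Finset ι) (T : ι → Set E) {ν : E} (hν : ν ≠ 0)
    (hclass : ∀ j ∈ F, T j = {y : E | 0 ≤ ⟪ν, y⟫} ∨ T j = {y : E | 0 ≤ ⟪-ν, y⟫})
    {i : ι} (hi : i ∈ F) (hTi : T i = {y : E | 0 ≤ ⟪ν, y⟫})
    (c : ℕ) (hc : 1 ≤ c)
    (hH : ∀ u : E, (∀ j ∈ F, u ∉ frontier (T j)) → {j | j ∈ F ∧ u ∈ T j}.ncard = c) :
    ∃ j ∈ F, interior (T i) ∩ interior (T j) = ∅ := by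
  have hνν : (0:ℝ) < ⟪ν, ν⟫ := by
    rw [real_inner_self_eq_norm_sq]
    have : 0 < ‖ν‖ := norm_pos_iff.2 hν
    positivity
  have hgood : ∀ j ∈ F, -ν ∉ frontier (T j) := by
    intro j hj
    rcases hclass j hj with h | h
    · rw [h, ktFrHalf hν, mem_setOf_eq, inner_neg_right]
      intro he; rw [neg_eq_zero] at he; exact hνν.ne' he
    · rw [h, ktFrHalf (neg_ne_zero.2 hν), mem_setOf_eq, inner_neg_neg]
      exact hνν.ne'
  have hcount := hH (-ν) hgood
  have hne : {j | j ∈ F ∧ -ν ∈ T j}.Nonempty := by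
    rw [← Set.ncard_pos (Set.Finite.subset F.finite_toSet (fun j hj => hj.1))]
    omega
  obtain ⟨j, hjF, hjmem⟩ := hne
  have hTj : T j = {y : E | 0 ≤ ⟪-ν, y⟫} := by
    rcases hclass j hjF with h | h
    · exfalso
      rw [h, mem_setOf_eq, inner_neg_right] at hjmem
      linarith
    · exact h
  refine ⟨j, hjF, ?_⟩
  rw [hTi, hTj, ktIntHalf hν, ktIntHalf (neg_ne_zero.2 hν)]
  ext z
  simp only [mem_inter_iff, mem_setOf_eq, inner_neg_left, mem_empty_iff_false, iff_false,
    not_and]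
  intro h1; linarith

theorem ktBase {ι : Type*} (F : Finset ι) (T : ι → Set E) (L : Submodule ℝ E) (c : ℕ)
    (hdim : finrank ℝ E ≤ finrank ℝ L + 1)
    (hconv : ∀ j ∈ F, Convex ℝ (T j))
    (hint : ∀ j ∈ F, (interior (T j)).Nonempty)
    (hcone : ∀ j ∈ F, ∀ r : ℝ, 0 < r → ∀ u ∈ T j, r • u ∈ T j)
    (hL : ∀ j ∈ F, (L : Set E) ⊆ T j)
    (hfr : ∀ j ∈ F, (0:E) ∈ frontier (T j))
    (i : ι) (hi : i ∈ F) (hc : 1 ≤ c)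
    (hH : ∀ u : E, (∀ j ∈ F, u ∉ frontier (T j)) → {j | j ∈ F ∧ u ∈ T j}.ncard = c) :
    ∃ j ∈ F, interior (T i) ∩ interior (T j) = ∅ := by
  have hLle : finrank ℝ L ≤ finrank ℝ E := L.finrank_le
  rcases eq_or_lt_of_le hLle with heq | hlt
  · -- L = ⊤ : contradiction
    exfalso
    have hLtop : L = ⊤ := Submodule.eq_top_of_finrank_eq heq
    have : T i = univ := eq_univ_of_univ_subset (by
      have := hL i hi
      rw [hLtop] at this
      simpa using this)
    have h0 := hfr i hi
    rw [this, frontier_univ] at h0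
    exact h0
  -- finrank L + 1 = finrank E
  have hdim1 : finrank ℝ L + 1 = finrank ℝ E := by omega
  -- get a normal vector
  have hbot : Lᗮ ≠ ⊥ := by
    intro h
    have := Submodule.finrank_add_finrank_orthogonal L
    rw [h, finrank_bot] at this
    omega
  obtain ⟨ν, hνL, hν⟩ := Submodule.ne_bot_iff _ |>.1 hbot
  have hLeq : L = (Submodule.span ℝ {ν})ᗮ := by
    apply Submodule.eq_of_le_of_finrank_eq
    · intro x hx
      rw [ktMemOrthSingleton, real_inner_comm]
      exact (Submodule.mem_orthogonal L ν).1 hνL x hx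
    · have h1 := Submodule.finrank_add_finrank_orthogonal (Submodule.span ℝ {ν})
      rw [finrank_span_singleton hν] at h1
      omega
  have hker : ∀ j ∈ F, ∀ w : E, ⟪ν, w⟫ = 0 → w ∈ T j := by
    intro j hj w hw
    exact hL j hj (by rw [hLeq]; exact ktMemOrthSingleton.2 hw)
  have hclass : ∀ j ∈ F, T j = {y : E | 0 ≤ ⟪ν, y⟫} ∨ T j = {y : E | 0 ≤ ⟪-ν, y⟫} := by
    intro j hj
    rcases ktHalfClassify hν (hconv j hj) (hcone j hj) (hker j hj) (hint j hj) (hfr j hj)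
      with h | h
    · exact Or.inl h
    · right
      rw [h]; ext y; simp only [mem_setOf_eq, inner_neg_left]
      constructor <;> intro <;> linarith
  rcases hclass i hi with hTi | hTi
  · exact ktBaseAux F T hν hclass hi hTi c hc hH
  · have hclass' : ∀ j ∈ F, T j = {y : E | 0 ≤ ⟪-ν, y⟫} ∨ T j = {y : E | 0 ≤ ⟪-(-ν), y⟫} := by
      intro j hj
      rcases hclass j hj with h | h
      · right; rwa [neg_neg]
      · exact Or.inl h
    exact ktBaseAux F T (neg_ne_zero.2 hν) hclass' hi hTi c hc hH

end Base
open Set Metric Module Filter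

section ConeLemma
variable {E : Type*} [NormedAddCommGroup E] [InnerProductSpace ℝ E] [FiniteDimensional ℝ E]

theorem ktSubmoduleDenseCompl {L : Submodule ℝ E} (h : L ≠ ⊤) : Dense ((L : Set E)ᶜ) := by
  apply interior_eq_empty_iff_dense_compl.1
  by_contra hne
  exact h (ktSubmoduleTop (nonempty_iff_ne_empty.2 hne))

theorem cone_lemma (m : ℕ) : ∀ {ι : Type*} (F : Finset ι) (T : ι → Set E)
    (L : Submodule ℝ E) (c : ℕ),
    finrank ℝ E ≤ finrank ℝ L + m →
    (∀ j ∈ F, IsClosed (T j)) →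
    (∀ j ∈ F, Convex ℝ (T j)) →
    (∀ j ∈ F, (interior (T j)).Nonempty) →
    (∀ j ∈ F, ∀ r : ℝ, 0 < r → ∀ u ∈ T j, r • u ∈ T j) →
    (∀ j ∈ F, (L : Set E) ⊆ T j) →
    (∀ j ∈ F, (0:E) ∈ frontier (T j)) →
    ∀ i : ι, i ∈ F → 1 ≤ c →
    (∀ u : E, (∀ j ∈ F, u ∉ frontier (T j)) → {j | j ∈ F ∧ u ∈ T j}.ncard = c) →
    ∃ j ∈ F, interior (T i) ∩ interior (T j) = ∅ := by
  induction m with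
  | zero =>
    intro ι F T L c hdim hcl hconv hint hcone hL hfr i hi hc hH
    exact ktBase F T L c (by omega) hconv hint hcone hL hfr i hi hc hH
  | succ m ih =>
    intro ι F T L c hdim hcl hconv hint hcone hL hfr i hi hc hH
    by_cases hbase : finrank ℝ E ≤ finrank ℝ L + 1
    · exact ktBase F T L c hbase hconv hint hcone hL hfr i hi hc hH
    push_neg at hbase
    have hdim2 : finrank ℝ L + 2 ≤ finrank ℝ E := hbase
    classical
    have hLtop : L ≠ ⊤ := by
      intro h; rw [h, finrank_top] at hdim2; omega
    obtain ⟨x, hxL, hxInt⟩ := (ktSubmoduleDenseCompl hLtop).exists_mem_open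
      isOpen_interior (hint i hi)
    have hx0 : x ≠ 0 := fun h => hxL (by rw [h]; exact L.zero_mem)
    set P := L ⊔ Submodule.span ℝ {x} with hP
    have hPrank : finrank ℝ P ≤ finrank ℝ L + 1 := by
      have h1 := Submodule.finrank_sup_add_finrank_inf_eq L (Submodule.span ℝ {x})
      rw [finrank_span_singleton hx0, ← hP] at h1
      omega
    have hPtop : P ≠ ⊤ := by
      intro h; rw [h, finrank_top] at hPrank; omega
    have hTiuniv : (T i)ᶜ.Nonempty := by
      rw [nonempty_compl]
      intro h
      have h0 := hfr i hi
      rw [h, frontier_univ] at h0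
      exact h0
    obtain ⟨y, hyP, hyT⟩ := (ktSubmoduleDenseCompl hPtop).exists_mem_open
      (hcl i hi).isOpen_compl hTiuniv
    -- the crossing point u₀ on the segment [x, y]
    set g : ℝ → E := fun t => x + t • (y - x) with hg
    have hgcont : Continuous g := continuous_const.add (continuous_id.smul continuous_const)
    set A := Icc (0:ℝ) 1 ∩ g ⁻¹' (T i) with hA
    have hA0 : (0:ℝ) ∈ A := ⟨⟨le_refl _, zero_le_one⟩, by
      simp only [hg, mem_preimage, zero_smul, add_zero]; exact interior_subset hxInt⟩
    have hAclosed : IsClosed A := isClosed_Icc.inter ((hcl i hi).preimage hgcont)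
    have hAbdd : BddAbove A := ⟨1, fun t ht => ht.1.2⟩
    set s := sSup A with hs
    have hsA : s ∈ A := hAclosed.csSup_mem ⟨0, hA0⟩ hAbdd
    set u₀ := g s with hu₀
    have hu₀T : u₀ ∈ T i := hsA.2
    have hs1 : s ≠ 1 := by
      intro h
      have : u₀ = y := by simp [hu₀, hg, h]
      rw [this] at hu₀T
      exact hyT hu₀T
    have hslt1 : s < 1 := lt_of_le_of_ne hsA.1.2 hs1
    have hu₀fr : u₀ ∈ frontier (T i) := by
      rw [(hcl i hi).frontier_eq, mem_diff]
      refine ⟨hu₀T, ?_⟩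
      intro hin
      obtain ⟨δ, hδ, hball⟩ := Metric.isOpen_iff.1 (isOpen_interior.preimage hgcont) s hin
      set t := min (s + δ/2) ((s+1)/2) with ht
      have hts : s < t := lt_min (by linarith) (by linarith)
      have ht1 : t ≤ 1 := le_trans (min_le_right _ _) (by linarith)
      have htball : t ∈ ball s δ := by
        rw [mem_ball_iff_norm, Real.norm_eq_abs, abs_of_pos (by linarith)]
        have : t ≤ s + δ/2 := min_le_left _ _
        linarith
      have htA : t ∈ A := ⟨⟨by linarith [hsA.1.1], ht1⟩,
        show g t ∈ T i from interior_subset (show g t ∈ interior (T i) from hball htball)⟩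
      exact absurd (le_csSup hAbdd htA) (not_le.2 hts)
    have hu₀L : u₀ ∉ L := by
      intro hmem
      have hs0 : s ≠ 0 := by
        intro h
        have : u₀ = x := by simp [hu₀, hg, h]
        rw [this] at hmem
        exact hxL hmem
      have hspos : 0 < s := lt_of_le_of_ne hsA.1.1 (Ne.symm hs0)
      have hyPmem : y ∈ P := by
        have hxP : x ∈ P := Submodule.mem_sup_right (Submodule.mem_span_singleton_self x)
        have hu₀P : u₀ ∈ P := Submodule.mem_sup_left hmem
        have hsub : u₀ - x ∈ P := P.sub_mem hu₀P hxP
        have : s⁻¹ • (u₀ - x) ∈ P := P.smul_mem _ hsub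
        have heq : s⁻¹ • (u₀ - x) = y - x := by
          rw [hu₀]
          simp only [hg, add_sub_cancel_left, smul_smul, inv_mul_cancel₀ hs0, one_smul]
        rw [heq] at this
        have := P.add_mem this hxP
        rwa [sub_add_cancel] at this
      exact hyP hyPmem
    -- Localize at u₀
    set F' := F.filter (fun j => u₀ ∈ frontier (T j)) with hF'
    set A' := F.filter (fun j => u₀ ∈ interior (T j)) with hA'
    have hF'F : ∀ j ∈ F', j ∈ F := fun j hj => (Finset.mem_filter.1 hj).1
    have hF'fr : ∀ j ∈ F', u₀ ∈ frontier (T j) := fun j hj => (Finset.mem_filter.1 hj).2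
    have hF'mem : ∀ j ∈ F', u₀ ∈ T j := fun j hj => by
      have := hF'fr j hj
      rw [(hcl j (hF'F j hj)).frontier_eq] at this
      exact this.1
    have hiF' : i ∈ F' := Finset.mem_filter.2 ⟨hi, hu₀fr⟩
    set T' : ι → Set E := fun j => Tc (T j) u₀ with hT'
    set L' := L ⊔ Submodule.span ℝ {u₀} with hL'
    -- rank of L'
    have hu₀L' : u₀ ∈ L' := Submodule.mem_sup_right (Submodule.mem_span_singleton_self u₀)
    have hLltL' : L < L' := lt_of_le_of_ne le_sup_left (by
      intro h; rw [← h] at hu₀L'; exact hu₀L hu₀L')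
    have hdim' : finrank ℝ E ≤ finrank ℝ L' + m := by
      have := Submodule.finrank_lt_finrank_of_lt hLltL'
      omega
    -- basic properties of the localized family
    have hcl' : ∀ j ∈ F', IsClosed (T' j) := fun j _ => isClosed_Tc
    have hconv' : ∀ j ∈ F', Convex ℝ (T' j) := fun j hj =>
      convex_Tc (hconv j (hF'F j hj)) (hF'mem j hj)
    have hintT' : ∀ j ∈ F', interior (T' j) = Oc (T j) u₀ := fun j hj =>
      interior_Tc (hconv j (hF'F j hj)) (hF'mem j hj) (hint j (hF'F j hj))
    have hint' : ∀ j ∈ F', (interior (T' j)).Nonempty := fun j hj => by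
      rw [hintT' j hj]; exact Oc_nonempty (hint j (hF'F j hj))
    have hcone' : ∀ j ∈ F', ∀ r : ℝ, 0 < r → ∀ u ∈ T' j, r • u ∈ T' j :=
      fun j _ r hr u hu => smul_mem_Tc hr hu
    have hzero' : ∀ j ∈ F', (0:E) ∈ T' j := fun j hj =>
      zero_mem_Tc (hconv j (hF'F j hj)) (hF'mem j hj) (hint j (hF'F j hj))
    have hfr' : ∀ j ∈ F', (0:E) ∈ frontier (T' j) := by
      intro j hj
      rw [isClosed_Tc.frontier_eq, mem_diff]
      refine ⟨hzero' j hj, ?_⟩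
      rw [hintT' j hj]
      rintro ⟨t, ht, hmem⟩
      rw [smul_zero, add_zero] at hmem
      exact (disjoint_left.1 disjoint_interior_frontier hmem) (hF'fr j hj)
    -- L' is contained in each localized cone
    have hL'sub : ∀ j ∈ F', (L' : Set E) ⊆ T' j := by
      intro j hj
      have hjF := hF'F j hj
      have hcj := hconv j hjF
      have hij := hint j hjF
      have hmemj := hF'mem j hj
      -- the symmetric part of T' j is a submodule
      have hadd : ∀ a b : E, a ∈ T' j → b ∈ T' j → a + b ∈ T' j := fun a b ha hb =>
        ktConeAdd (hconv' j hj) (fun r hr u hu => smul_mem_Tc hr hu) ha hb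
      set W : Submodule ℝ E :=
        { carrier := {v | v ∈ T' j ∧ -v ∈ T' j}
          add_mem' := by
            rintro a b ⟨ha1, ha2⟩ ⟨hb1, hb2⟩
            refine ⟨hadd a b ha1 hb1, ?_⟩
            rw [neg_add]
            exact hadd _ _ ha2 hb2
          zero_mem' := ⟨hzero' j hj, by rw [neg_zero]; exact hzero' j hj⟩
          smul_mem' := by
            rintro r v ⟨hv1, hv2⟩
            rcases lt_trichotomy r 0 with hr | hr | hr
            · constructor
              · have : r • v = (-r) • (-v) := by rw [neg_smul, smul_neg, neg_neg]
                rw [this]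
                exact smul_mem_Tc (by linarith) hv2
              · have : -(r • v) = (-r) • v := by rw [neg_smul]
                rw [this]
                exact smul_mem_Tc (by linarith) hv1
            · rw [hr, zero_smul]
              exact ⟨hzero' j hj, by rw [neg_zero]; exact hzero' j hj⟩
            · exact ⟨smul_mem_Tc hr hv1, by rw [← smul_neg]; exact smul_mem_Tc hr hv2⟩ } with hW
      have hLW : L' ≤ W := by
        rw [hL']
        apply sup_le
        · intro v hv
          have hvT : v ∈ T j := hL j hjF hv
          have hvT' : -v ∈ T j := hL j hjF (L.neg_mem hv)
          constructor
          · apply mem_Tc_of_ray hcj hij one_pos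
            rw [one_smul]
            exact ktConeAdd hcj (hcone j hjF) hmemj hvT
          · apply mem_Tc_of_ray hcj hij one_pos
            rw [one_smul]
            exact ktConeAdd hcj (hcone j hjF) hmemj hvT'
        · rw [Submodule.span_le, singleton_subset_iff]
          constructor
          · apply mem_Tc_of_ray hcj hij one_pos
            rw [one_smul]
            have h2 : (2:ℝ) • u₀ ∈ T j := hcone j hjF 2 (by norm_num) u₀ hmemj
            rwa [two_smul] at h2
          · apply mem_Tc_of_ray hcj hij one_pos
            rw [one_smul, add_neg_cancel]
            have h0 := hfr j hjF
            rw [(hcl j hjF).frontier_eq] at h0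
            exact h0.1
      intro v hv
      exact (hLW hv).1
    -- counting transfer
    have hH' : ∀ w : E, (∀ j ∈ F', w ∉ frontier (T' j)) →
        {j | j ∈ F' ∧ w ∈ T' j}.ncard + A'.card = c := by
      intro w hw
      have hevent : ∀ᶠ t in nhdsWithin (0:ℝ) (Ioi 0), ∀ j ∈ F,
          ((u₀ + t • w ∈ T j ↔ (j ∈ A' ∨ (j ∈ F' ∧ w ∈ T' j))) ∧
            u₀ + t • w ∉ frontier (T j)) := by
        rw [Finset.eventually_all]
        intro j hj
        have hlim : Tendsto (fun t : ℝ => u₀ + t • w) (nhdsWithin 0 (Ioi 0)) (nhds u₀) := by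
          have hco : Continuous fun t : ℝ => u₀ + t • w :=
            continuous_const.add (continuous_id.smul continuous_const)
          have := hco.tendsto 0
          simp only [zero_smul, add_zero] at this
          exact this.mono_left nhdsWithin_le_nhds
        by_cases hjT : u₀ ∈ T j
        · by_cases hjint : u₀ ∈ interior (T j)
          · -- j ∈ A'
            have hjA' : j ∈ A' := Finset.mem_filter.2 ⟨hj, hjint⟩
            have hev : ∀ᶠ t in nhdsWithin (0:ℝ) (Ioi 0), u₀ + t • w ∈ interior (T j) :=
              hlim.eventually (isOpen_interior.mem_nhds hjint)
            refine hev.mono fun t htmem => ⟨?_, ?_⟩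
            · constructor
              · intro _; exact Or.inl hjA'
              · intro _; exact interior_subset htmem
            · exact fun hfr2 => (disjoint_left.1 disjoint_interior_frontier htmem) hfr2
          · -- j ∈ F'
            have hjfr : u₀ ∈ frontier (T j) := by
              rw [(hcl j hj).frontier_eq]; exact ⟨hjT, hjint⟩
            have hjF'mem : j ∈ F' := Finset.mem_filter.2 ⟨hj, hjfr⟩
            have hjA' : j ∉ A' := by
              intro h
              exact hjint (Finset.mem_filter.1 h).2
            have hwj := hw j hjF'mem
            by_cases hwT' : w ∈ T' j
            · -- w ∈ interior (T' j) = Oc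
              have hwO : w ∈ Oc (T j) u₀ := by
                rw [← hintT' j hjF'mem]
                rw [isClosed_Tc.frontier_eq, mem_diff] at hwj
                push_neg at hwj
                exact hwj hwT'
              obtain ⟨t₁, ht₁, hmem₁⟩ := hwO
              have hevsmall : ∀ᶠ t in nhdsWithin (0:ℝ) (Ioi 0), t ∈ Ioc (0:ℝ) t₁ :=
                Ioc_mem_nhdsGT_of_mem ⟨le_refl _, ht₁⟩
              refine hevsmall.mono fun t ht => ?_
              have hmem : u₀ + t • w ∈ interior (T j) :=
                Oc_downward (hconv j hj) hjT ht.1 ht.2 hmem₁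
              refine ⟨⟨fun _ => Or.inr ⟨hjF'mem, hwT'⟩, fun _ => interior_subset hmem⟩, ?_⟩
              exact fun hfr2 => (disjoint_left.1 disjoint_interior_frontier hmem) hfr2
            · -- w outside T' j : the ray stays outside T j
              have hout : ∀ t : ℝ, 0 < t → u₀ + t • w ∉ T j := fun t ht =>
                notMem_C_of_notMem_Tc (hconv j hj) (hint j hj) hwT' ht
              refine eventually_mem_nhdsWithin.mono fun t (ht : t ∈ Ioi (0:ℝ)) => ?_
              have hnot := hout t ht
              refine ⟨⟨fun hmem => absurd hmem hnot, ?_⟩, ?_⟩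
              · rintro (hA'mem | ⟨_, hwmem⟩)
                · exact absurd (Finset.mem_filter.1 hA'mem).2 hjint
                · exact absurd hwmem hwT'
              · intro hfr2
                exact hnot (((hcl j hj).frontier_eq ▸ hfr2).1)
        · -- u₀ outside T j
          have hev : ∀ᶠ t in nhdsWithin (0:ℝ) (Ioi 0), u₀ + t • w ∈ (T j)ᶜ :=
            hlim.eventually ((hcl j hj).isOpen_compl.mem_nhds hjT)
          refine hev.mono fun t htmem => ?_
          refine ⟨⟨fun hmem => absurd hmem htmem, ?_⟩, ?_⟩
          · rintro (hA'mem | ⟨hF'mem2, _⟩)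
            · exact absurd (interior_subset (Finset.mem_filter.1 hA'mem).2) hjT
            · exact absurd (hF'mem _ hF'mem2) hjT
          · intro hfr2
            exact htmem (((hcl j hj).frontier_eq ▸ hfr2).1)
      obtain ⟨t, ht, htpos⟩ := (hevent.and self_mem_nhdsWithin).exists
      have hgood : ∀ j ∈ F, u₀ + t • w ∉ frontier (T j) := fun j hj => (ht j hj).2
      have hcount := hH (u₀ + t • w) hgood
      have hseteq : {j | j ∈ F ∧ u₀ + t • w ∈ T j}
          = {j | j ∈ F' ∧ w ∈ T' j} ∪ (A' : Set ι) := by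
        ext j
        simp only [mem_setOf_eq, mem_union, Finset.coe_filter, Finset.mem_coe]
        constructor
        · rintro ⟨hjF, hjmem⟩
          rcases ((ht j hjF).1).1 hjmem with h | h
          · exact Or.inr (by simpa using h)
          · exact Or.inl h
        · rintro (⟨hjF'2, hjw⟩ | hjA2)
          · exact ⟨hF'F j hjF'2, ((ht j (hF'F j hjF'2)).1).2 (Or.inr ⟨hjF'2, hjw⟩)⟩
          · have hjA2' : j ∈ A' := by simpa using hjA2
            exact ⟨(Finset.mem_filter.1 hjA2').1,
              ((ht j (Finset.mem_filter.1 hjA2').1).1).2 (Or.inl hjA2')⟩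
      rw [hseteq] at hcount
      have hdisj : Disjoint {j | j ∈ F' ∧ w ∈ T' j} (A' : Set ι) := by
        rw [disjoint_left]
        rintro j ⟨hjF'2, _⟩ hjA2
        have h1 := hF'fr j hjF'2
        have h2 := (Finset.mem_filter.1 (by simpa using hjA2 : j ∈ A')).2
        exact (disjoint_left.1 disjoint_interior_frontier h2) h1
      rw [Set.ncard_union_eq hdisj
        (Set.Finite.subset F'.finite_toSet fun j hj => hj.1)
        A'.finite_toSet, Set.ncard_coe_finset] at hcount
      exact hcount
    -- c' ≥ 1 via a good direction in the interior of T' i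
    have hdense' : Dense {w : E | ∀ j ∈ F', w ∉ frontier (T' j)} := by
      apply dense_good F' (fun j => frontier (T' j))
      · exact fun j _ => isClosed_frontier
      · intro j hj
        exact interior_frontier_Tc (hconv j (hF'F j hj)) (hF'mem j hj) (hint j (hF'F j hj))
    obtain ⟨w₀, hw₀good, hw₀O⟩ := hdense'.exists_mem_open isOpen_Oc
      (Oc_nonempty (p := u₀) (hint i hi))
    have hw₀count := hH' w₀ hw₀good
    have hw₀i : i ∈ {j | j ∈ F' ∧ w₀ ∈ T' j} := ⟨hiF', Oc_subset_Tc hw₀O⟩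
    have hw₀pos : 1 ≤ {j | j ∈ F' ∧ w₀ ∈ T' j}.ncard :=
      (Set.ncard_pos (Set.Finite.subset F'.finite_toSet fun j hj => hj.1)).2 ⟨i, hw₀i⟩
    set c' := c - A'.card with hc'
    have hc'1 : 1 ≤ c' := by omega
    have hH'' : ∀ w : E, (∀ j ∈ F', w ∉ frontier (T' j)) →
        {j | j ∈ F' ∧ w ∈ T' j}.ncard = c' := by
      intro w hw
      have := hH' w hw
      omega
    obtain ⟨j, hjF'fin, hdisjfin⟩ := ih F' T' L' c' hdim' hcl' hconv' hint' hcone'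
      hL'sub hfr' i hiF' hc'1 hH''
    refine ⟨j, hF'F j hjF'fin, ?_⟩
    rw [eq_empty_iff_forall_notMem]
    rintro z ⟨hzi, hzj⟩
    have hz1 : z - u₀ ∈ interior (T' i) := by
      rw [hintT' i hiF']
      exact sub_mem_Oc hzi
    have hz2 : z - u₀ ∈ interior (T' j) := by
      rw [hintT' j hjF'fin]
      exact sub_mem_Oc hzj
    rw [eq_empty_iff_forall_notMem] at hdisjfin
    exact hdisjfin (z - u₀) ⟨hz1, hz2⟩
end ConeLemma
open Set Metric Module Filter

/-- A convex body in ℝⁿ: a compact convex set with nonempty interior. -/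
def IsConvexBody {n : ℕ} (K : Set (EuclideanSpace ℝ (Fin n))) : Prop :=
  IsCompact K ∧ Convex ℝ K ∧ (interior K).Nonempty

/-- A (locally finite) family `K i` is a `k`-fold tiling of `D`: every point of `D`
not lying on the boundary of any member lies in exactly `k` members (with multiplicity). -/
def IsKFoldTilingOf {n : ℕ} {ι : Type*} (K : ι → Set (EuclideanSpace ℝ (Fin n)))
    (D : Set (EuclideanSpace ℝ (Fin n))) (k : ℕ) : Prop :=
  (∀ B : Set (EuclideanSpace ℝ (Fin n)), Bornology.IsBounded B →
      {i | (K i ∩ B).Nonempty}.Finite) ∧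
  ∀ p ∈ D, (∀ i, p ∉ frontier (K i)) → {i | p ∈ K i}.encard = k

theorem stmt_3 {n : ℕ} {ι : Type*} (K : ι → Set (EuclideanSpace ℝ (Fin n)))
    (D : Set (EuclideanSpace ℝ (Fin n))) (hD : IsConnected D)
    (hbody : ∀ i, IsConvexBody (K i)) (k : ℕ) (hk : 0 < k)
    (htile : IsKFoldTilingOf K D k) :
    ∀ i, ∀ q ∈ frontier (K i), q ∈ interior D →
      ∃ j, q ∈ frontier (K j) ∧ interior (K i) ∩ interior (K j) = ∅ := by
  intro i q hqfr hqD
  classical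
  have hclK : ∀ j, IsClosed (K j) := fun j => (hbody j).1.isClosed
  have hconvK : ∀ j, Convex ℝ (K j) := fun j => (hbody j).2.1
  have hintK : ∀ j, (interior (K j)).Nonempty := fun j => (hbody j).2.2
  have hfrK : ∀ j, frontier (K j) ⊆ K j := fun j =>
    (hclK j).frontier_subset
  -- a ball around q inside D
  obtain ⟨ε₀, hε₀, hball⟩ := Metric.isOpen_iff.1 isOpen_interior q hqD
  have hballD : ball q ε₀ ⊆ D := hball.trans interior_subset
  -- finite set of locally relevant indices
  have hfin := htile.1 (closedBall q (ε₀/2)) isBounded_closedBall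
  set Sall := hfin.toFinset with hSalldef
  have hSall : ∀ j, j ∈ Sall ↔ (K j ∩ closedBall q (ε₀/2)).Nonempty := fun j =>
    hfin.mem_toFinset
  set F := Sall.filter (fun j => q ∈ frontier (K j)) with hFdef
  set A := Sall.filter (fun j => q ∈ interior (K j)) with hAdef
  have hFfr : ∀ j ∈ F, q ∈ frontier (K j) := fun j hj => (Finset.mem_filter.1 hj).2
  have hFq : ∀ j ∈ F, q ∈ K j := fun j hj => hfrK j (hFfr j hj)
  have hiF : i ∈ F := by
    refine Finset.mem_filter.2 ⟨(hSall i).2 ⟨q, hfrK i hqfr, ?_⟩, hqfr⟩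
    rw [mem_closedBall, dist_self]
    positivity
  -- a small radius avoiding all nearby bodies not containing q
  have hUopen : IsOpen ((⋂ j ∈ Sall.filter (fun j => q ∉ K j), (K j)ᶜ) ∩ ball q (ε₀/2)) := by
    refine IsOpen.inter ?_ isOpen_ball
    exact isOpen_biInter_finset (fun j _ => (hclK j).isOpen_compl)
  have hqU : q ∈ (⋂ j ∈ Sall.filter (fun j => q ∉ K j), (K j)ᶜ) ∩ ball q (ε₀/2) := by
    constructor
    · exact mem_biInter fun j hj => (Finset.mem_filter.1 hj).2
    · rw [mem_ball, dist_self]; positivity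
  obtain ⟨ε₁, hε₁, hball₁⟩ := Metric.isOpen_iff.1 hUopen q hqU
  have hε₁out : ∀ j ∈ Sall, q ∉ K j → ∀ z ∈ ball q ε₁, z ∉ K j := by
    intro j hj hq z hz
    exact mem_iInter₂.1 (hball₁ hz).1 j (Finset.mem_filter.2 ⟨hj, hq⟩)
  have hε₁ball : ball q ε₁ ⊆ ball q (ε₀/2) := fun z hz => (hball₁ hz).2
  -- tangent cones at q
  set T : ι → Set (EuclideanSpace ℝ (Fin n)) := fun j => Tc (K j) q with hTdef
  have hintT : ∀ j ∈ F, interior (T j) = Oc (K j) q := fun j hj =>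
    interior_Tc (hconvK j) (hFq j hj) (hintK j)
  have hfrT : ∀ j ∈ F, (0 : EuclideanSpace ℝ (Fin n)) ∈ frontier (T j) := by
    intro j hj
    rw [isClosed_Tc.frontier_eq, mem_diff]
    refine ⟨zero_mem_Tc (hconvK j) (hFq j hj) (hintK j), ?_⟩
    rw [hintT j hj]
    rintro ⟨t, ht, hmem⟩
    rw [smul_zero, add_zero] at hmem
    exact (disjoint_left.1 disjoint_interior_frontier hmem) (hFfr j hj)
  -- the counting hypothesis for the tangent cones
  have hH : ∀ u, (∀ j ∈ F, u ∉ frontier (T j)) →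
      {j | j ∈ F ∧ u ∈ T j}.ncard + A.card = k := by
    intro u hu
    have hlim : Tendsto (fun t : ℝ => q + t • u) (nhdsWithin 0 (Ioi 0)) (nhds q) := by
      have hco : Continuous fun t : ℝ => q + t • u :=
        continuous_const.add (continuous_id.smul continuous_const)
      have := hco.tendsto 0
      simp only [zero_smul, add_zero] at this
      exact this.mono_left nhdsWithin_le_nhds
    have hev0 : ∀ᶠ t in nhdsWithin (0:ℝ) (Ioi 0), q + t • u ∈ ball q ε₁ :=
      hlim.eventually (isOpen_ball.mem_nhds (by rw [mem_ball, dist_self]; positivity))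
    have hevent : ∀ᶠ t in nhdsWithin (0:ℝ) (Ioi 0), ∀ j ∈ Sall,
        ((q + t • u ∈ K j ↔ (j ∈ A ∨ (j ∈ F ∧ u ∈ T j))) ∧
          q + t • u ∉ frontier (K j)) := by
      rw [Finset.eventually_all]
      intro j hj
      by_cases hjT : q ∈ K j
      · by_cases hjint : q ∈ interior (K j)
        · have hjA : j ∈ A := Finset.mem_filter.2 ⟨hj, hjint⟩
          have hev : ∀ᶠ t in nhdsWithin (0:ℝ) (Ioi 0), q + t • u ∈ interior (K j) :=
            hlim.eventually (isOpen_interior.mem_nhds hjint)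
          refine hev.mono fun t htmem => ⟨⟨fun _ => Or.inl hjA, fun _ => interior_subset htmem⟩, ?_⟩
          exact fun hfr2 => (disjoint_left.1 disjoint_interior_frontier htmem) hfr2
        · have hjfr : q ∈ frontier (K j) := by
            rw [(hclK j).frontier_eq]; exact ⟨hjT, hjint⟩
          have hjF : j ∈ F := Finset.mem_filter.2 ⟨hj, hjfr⟩
          have hjA : j ∉ A := fun h => hjint (Finset.mem_filter.1 h).2
          have huj := hu j hjF
          by_cases huT : u ∈ T j
          · have huO : u ∈ Oc (K j) q := by
              rw [← hintT j hjF]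
              rw [isClosed_Tc.frontier_eq, mem_diff] at huj
              push_neg at huj
              exact huj huT
            obtain ⟨t₁, ht₁, hmem₁⟩ := huO
            have hevsmall : ∀ᶠ t in nhdsWithin (0:ℝ) (Ioi 0), t ∈ Ioc (0:ℝ) t₁ :=
              Ioc_mem_nhdsGT_of_mem ⟨le_refl _, ht₁⟩
            refine hevsmall.mono fun t ht => ?_
            have hmem : q + t • u ∈ interior (K j) :=
              Oc_downward (hconvK j) hjT ht.1 ht.2 hmem₁
            refine ⟨⟨fun _ => Or.inr ⟨hjF, huT⟩, fun _ => interior_subset hmem⟩, ?_⟩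
            exact fun hfr2 => (disjoint_left.1 disjoint_interior_frontier hmem) hfr2
          · have hout : ∀ t : ℝ, 0 < t → q + t • u ∉ K j := fun t ht =>
              notMem_C_of_notMem_Tc (hconvK j) (hintK j) huT ht
            refine eventually_mem_nhdsWithin.mono fun t (ht : t ∈ Ioi (0:ℝ)) => ?_
            have hnot := hout t ht
            refine ⟨⟨fun hmem => absurd hmem hnot, ?_⟩, fun hfr2 => hnot (hfrK j hfr2)⟩
            rintro (hA2 | ⟨_, huT2⟩)
            · exact absurd hA2 hjA
            · exact absurd huT2 huT
      · -- q ∉ K j : stay outside via the ε₁ ball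
        refine hev0.mono fun t htb => ?_
        have hnot : q + t • u ∉ K j := hε₁out j hj hjT _ htb
        refine ⟨⟨fun hmem => absurd hmem hnot, ?_⟩, fun hfr2 => hnot (hfrK j hfr2)⟩
        rintro (hA2 | ⟨hF2, _⟩)
        · exact absurd (interior_subset (Finset.mem_filter.1 hA2).2) hjT
        · exact absurd (hFq _ hF2) hjT
    obtain ⟨t, ⟨ht, htb⟩, htpos⟩ := ((hevent.and hev0).and self_mem_nhdsWithin).exists
    set p := q + t • u with hpdef
    have hpD : p ∈ D := hballD (ball_subset_ball (by linarith) (hε₁ball htb))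
    have hpgood : ∀ j : ι, p ∉ frontier (K j) := by
      intro j
      by_cases hj : j ∈ Sall
      · exact (ht j hj).2
      · intro hfr2
        have hpK : p ∈ K j := hfrK j hfr2
        refine hj ((hSall j).2 ⟨p, hpK, ?_⟩)
        have := hε₁ball htb
        exact ball_subset_closedBall this
    have hcount := htile.2 p hpD hpgood
    have hseteq : {j | p ∈ K j} = {j | j ∈ F ∧ u ∈ T j} ∪ (A : Set ι) := by
      ext j
      simp only [mem_setOf_eq, mem_union, Finset.mem_coe]
      constructor
      · intro hmem
        have hj : j ∈ Sall := (hSall j).2 ⟨p, hmem, ball_subset_closedBall (hε₁ball htb)⟩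
        rcases ((ht j hj).1).1 hmem with h | h
        · exact Or.inr h
        · exact Or.inl h
      · rintro (⟨hjF, hju⟩ | hjA)
        · exact ((ht j (Finset.mem_filter.1 hjF).1).1).2 (Or.inr ⟨hjF, hju⟩)
        · exact ((ht j (Finset.mem_filter.1 hjA).1).1).2 (Or.inl hjA)
    have hS1fin : {j | j ∈ F ∧ u ∈ T j}.Finite :=
      Set.Finite.subset F.finite_toSet fun j hj => hj.1
    have hdisj : Disjoint {j | j ∈ F ∧ u ∈ T j} (A : Set ι) := by
      rw [disjoint_left]
      rintro j ⟨hjF, _⟩ hjA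
      have h1 := hFfr j hjF
      have h2 := (Finset.mem_filter.1 (by simpa using hjA : j ∈ A)).2
      exact (disjoint_left.1 disjoint_interior_frontier h2) h1
    have hncard : {j | p ∈ K j}.ncard = k := by
      rw [Set.ncard_def, hcount, ENat.toNat_coe]
    rw [hseteq] at hncard
    rw [Set.ncard_union_eq hdisj hS1fin A.finite_toSet, Set.ncard_coe_finset] at hncard
    exact hncard
  -- the count is at least 1 (witnessed near the interior of K i)
  have hdenseF : Dense {u : EuclideanSpace ℝ (Fin n) | ∀ j ∈ F, u ∉ frontier (T j)} := by
    apply dense_good F (fun j => frontier (T j))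
    · exact fun j _ => isClosed_frontier
    · intro j hj
      exact interior_frontier_Tc (hconvK j) (hFq j hj) (hintK j)
  obtain ⟨u₀, hu₀good, hu₀O⟩ := hdenseF.exists_mem_open isOpen_Oc
    (Oc_nonempty (p := q) (hintK i))
  have hu₀count := hH u₀ hu₀good
  have hu₀pos : 1 ≤ {j | j ∈ F ∧ u₀ ∈ T j}.ncard :=
    (Set.ncard_pos (Set.Finite.subset F.finite_toSet fun j hj => hj.1)).2
      ⟨i, hiF, Oc_subset_Tc hu₀O⟩
  set c := k - A.card with hcdef
  have hc1 : 1 ≤ c := by omega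
  have hH' : ∀ u, (∀ j ∈ F, u ∉ frontier (T j)) → {j | j ∈ F ∧ u ∈ T j}.ncard = c := by
    intro u hu
    have := hH u hu
    omega
  -- apply the cone lemma
  obtain ⟨j, hjF, hdisjT⟩ := cone_lemma n F T ⊥ c
    (by simp [finrank_euclideanSpace_fin])
    (fun j _ => isClosed_Tc)
    (fun j hj => convex_Tc (hconvK j) (hFq j hj))
    (fun j hj => by rw [hintT j hj]; exact Oc_nonempty (hintK j))
    (fun j _ r hr v hv => smul_mem_Tc hr hv)
    (fun j hj => by
      rw [Submodule.bot_coe, singleton_subset_iff]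
      exact zero_mem_Tc (hconvK j) (hFq j hj) (hintK j))
    hfrT i hiF hc1 hH'
  refine ⟨j, hFfr j hjF, ?_⟩
  rw [eq_empty_iff_forall_notMem]
  rintro z ⟨hzi, hzj⟩
  rw [eq_empty_iff_forall_notMem] at hdisjT
  refine hdisjT (z - q) ⟨?_, ?_⟩
  · rw [hintT i hiF]; exact sub_mem_Oc hzi
  · rw [hintT j hjF]; exact sub_mem_Oc hzj
end

section
/- Let {K + x : x ∈ X} be a k-fold translative tiling of ℝⁿ by a convex body K, with 0 ∈ X. Then for every boundary point q of K, the set X_K(q) = {x ∈ X : q ∈ K + x} is finite and has cardinality at least k. -/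
open Pointwise
/-- `K` is a `k`-fold translative tile: there is a (locally finite) multiset of translation
vectors, encoded as a family `x : ι → ℝⁿ`, such that every point of `ℝⁿ` not on the boundary
of any translate lies in exactly `k` translates, counted with multiplicity. -/
def IsKFoldTranslativeTile {n : ℕ} (K : Set (EuclideanSpace ℝ (Fin n))) (k : ℕ) : Prop :=
  ∃ (ι : Type) (x : ι → EuclideanSpace ℝ (Fin n)),
    (∀ B : Set (EuclideanSpace ℝ (Fin n)), Bornology.IsBounded B →
        {i | ((x i +ᵥ K) ∩ B).Nonempty}.Finite) ∧
    ∀ p : EuclideanSpace ℝ (Fin n),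
      (∀ i, p ∉ frontier (x i +ᵥ K)) → {i | p ∈ x i +ᵥ K}.encard = k

theorem stmt_10 {n : ℕ} (K : Set (EuclideanSpace ℝ (Fin n))) (hK : IsConvexBody K)
    (k : ℕ) (hk : 0 < k) {ι : Type} (x : ι → EuclideanSpace ℝ (Fin n))
    (hloc : ∀ B : Set (EuclideanSpace ℝ (Fin n)), Bornology.IsBounded B →
        {i | ((x i +ᵥ K) ∩ B).Nonempty}.Finite)
    (htile : ∀ p : EuclideanSpace ℝ (Fin n),
        (∀ i, p ∉ frontier (x i +ᵥ K)) → {i | p ∈ x i +ᵥ K}.encard = k)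
    (i₀ : ι) (hx₀ : x i₀ = 0) :
    ∀ q ∈ frontier K,
      {i | q ∈ x i +ᵥ K}.Finite ∧ k ≤ {i | q ∈ x i +ᵥ K}.ncard := by
  classical
  intro q hq
  have hKclosed : IsClosed K := hK.1.isClosed
  have hclosed : ∀ i, IsClosed (x i +ᵥ K) := fun i => hKclosed.vadd _
  set S := {i | q ∈ x i +ᵥ K} with hS
  have hSfin : S.Finite :=
    (hloc {q} Bornology.isBounded_singleton).subset fun i hi => ⟨q, hi, rfl⟩
  refine ⟨hSfin, ?_⟩
  have hFfin := hloc (Metric.closedBall q 1) Metric.isBounded_closedBall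
  set F := {i | ((x i +ᵥ K) ∩ Metric.closedBall q 1).Nonempty} with hF
  set G : Finset ι := hFfin.toFinset.filter (fun i => i ∉ S) with hG
  have hopen : IsOpen (⋂ i ∈ G, (x i +ᵥ K)ᶜ) :=
    isOpen_biInter_finset fun i _ => (hclosed i).isOpen_compl
  have hqmem : q ∈ ⋂ i ∈ G, (x i +ᵥ K)ᶜ := by
    simp only [Set.mem_iInter, Set.mem_compl_iff]
    intro i hi
    exact (Finset.mem_filter.1 hi).2
  obtain ⟨ε, hε, hball⟩ := Metric.isOpen_iff.1 hopen q hqmem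
  set ε' := min ε 1 with hε'
  have hε'pos : 0 < ε' := lt_min hε one_pos
  have hnull : MeasureTheory.volume (⋃ i ∈ hSfin.toFinset, frontier (x i +ᵥ K)) = 0 := by
    refine (MeasureTheory.measure_biUnion_null_iff hSfin.toFinset.countable_toSet).2 ?_
    intro i _
    exact ((hK.2.1.vadd (x i))).addHaar_frontier MeasureTheory.volume
  have hpos : 0 < MeasureTheory.volume (Metric.ball q ε') :=
    Metric.measure_ball_pos _ _ hε'pos
  have hne : (Metric.ball q ε' \ ⋃ i ∈ hSfin.toFinset, frontier (x i +ᵥ K)).Nonempty := by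
    rw [Set.nonempty_iff_ne_empty]
    intro hcontra
    have hle : MeasureTheory.volume (Metric.ball q ε')
        ≤ MeasureTheory.volume (⋃ i ∈ hSfin.toFinset, frontier (x i +ᵥ K)) :=
      MeasureTheory.measure_mono (Set.diff_eq_empty.1 hcontra)
    rw [hnull] at hle
    exact absurd (le_antisymm hle zero_le) (ne_of_gt hpos)
  obtain ⟨p, hpball, hpfr⟩ := hne
  have hpε : p ∈ Metric.ball q ε :=
    Metric.ball_subset_ball (min_le_left ε 1) hpball
  have hp1 : p ∈ Metric.closedBall q 1 :=
    Metric.ball_subset_closedBall (Metric.ball_subset_ball (min_le_right ε 1) hpball)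
  have hGavoid : ∀ i ∈ G, p ∉ x i +ᵥ K := by
    intro i hiG hpi
    have := hball hpε
    simp only [Set.mem_iInter, Set.mem_compl_iff] at this
    exact this i hiG hpi
  have hsub : {i | p ∈ x i +ᵥ K} ⊆ S := by
    intro i hpi
    by_contra hiS
    by_cases hiF : i ∈ F
    · exact hGavoid i (Finset.mem_filter.2 ⟨hFfin.mem_toFinset.2 hiF, hiS⟩) hpi
    · exact hiF ⟨p, hpi, hp1⟩
  have hpgood : ∀ i, p ∉ frontier (x i +ᵥ K) := by
    intro i hpi
    have hpK : p ∈ x i +ᵥ K := (hclosed i).frontier_subset hpi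
    have hiS : i ∈ S := hsub hpK
    exact hpfr (Set.mem_biUnion (hSfin.mem_toFinset.2 hiS) hpi)
  have hk' : {i | p ∈ x i +ᵥ K}.encard = k := htile p hpgood
  have h1 : (k : ℕ∞) ≤ S.encard := by
    rw [← hk']; exact Set.encard_mono hsub
  have h2 : S.encard = (S.ncard : ℕ∞) := hSfin.encard_eq_coe_toFinset_card.trans
    (by rw [Set.ncard_eq_toFinset_card _ hSfin])
  exact_mod_cast h1.trans_eq h2
end
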